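/- Sum formula for dual Horadam quaternions: if α ≠ 1 and β ≠ 1, then for every natural number n, Σ_{i=0}^{n} Ĝᵢ = d₁ + d₂·ε, where d₁ = Σ_{i=0}^{n} Gᵢ = (1/(α−β))·( B·β̲·βⁿ⁺¹/(1−β) − A·α̲·αⁿ⁺¹/(1−α) ) + K and d₂ = Σ_{i=1}^{n+1} Gᵢ = (1/(α−β))·( B·β̲·βⁿ⁺²/(1−β) − A·α̲·αⁿ⁺²/(1−α) ) − G₀ + K, with K = (A·α̲·(1−β) − B·β̲·(1−α)) / ((α−β)(1−α)(1−β)). -/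

import Mathlib

set_option maxHeartbeats 1000000


open Quaternion DualNumber TrivSqZeroExt

/-- The Horadam sequence `w(a,b;p,q)`: `w₀ = a`, `w₁ = b`,
`wₙ = p·wₙ₋₁ + q·wₙ₋₂` for `n ≥ 2`. -/
def horadam (a b p q : ℝ) : ℕ → ℝ
  | 0 => a
  | 1 => b
  | n + 2 => p * horadam a b p q (n + 1) + q * horadam a b p q n

/-- The `n`-th Horadam quaternion `Gₙ = wₙ + wₙ₊₁·i + wₙ₊₂·j + wₙ₊₃·k`. -/
def horadamQ (a b p q : ℝ) (n : ℕ) : ℍ[ℝ] :=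
  ⟨horadam a b p q n, horadam a b p q (n + 1), horadam a b p q (n + 2), horadam a b p q (n + 3)⟩

/-- The `n`-th dual Horadam quaternion `Ĝₙ = Gₙ + Gₙ₊₁·ε`, an element of the
dual numbers over `ℍ[ℝ]`, where `ε² = 0`. -/
noncomputable def dualHoradamQ (a b p q : ℝ) (n : ℕ) : DualNumber ℍ[ℝ] :=
  inl (horadamQ a b p q n) + inl (horadamQ a b p q (n + 1)) * ε

/-- Binet formula (multiplied form). -/
lemma horadam_binet (a b p q : ℝ) (α β A B : ℝ)
    (hrα : α ^ 2 = p * α + q) (hrβ : β ^ 2 = p * β + q)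
    (hA : A = b - a * β) (hB : B = b - a * α) :
    ∀ n : ℕ, (α - β) * horadam a b p q n = A * α ^ n - B * β ^ n := by
  intro n
  induction n using Nat.twoStepInduction with
  | zero => simp [horadam, hA, hB]; ring
  | one => simp [horadam, hA, hB]; ring
  | more n ih1 ih2 =>
    show (α - β) * (p * horadam a b p q (n + 1) + q * horadam a b p q n) = _
    have h1 : A * α ^ (n + 2) = A * α ^ n * (p * α + q) := by rw [← hrα]; ring
    have h2 : B * β ^ (n + 2) = B * β ^ n * (p * β + q) := by rw [← hrβ]; ring
    rw [h1, h2]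
    linear_combination p * ih2 + q * ih1

/-- Sum formula for dual Horadam quaternions: `Σ_{i=0}^{n} Ĝᵢ = d₁ + d₂·ε` where
`d₁ = Σ_{i=0}^{n} Gᵢ` and `d₂ = Σ_{i=1}^{n+1} Gᵢ` have the stated Binet closed forms. -/
theorem dualHoradamQ_sum (a b p q : ℝ) (hpq : p ^ 2 + 4 * q > 0)
    (α β A B : ℝ)
    (hα : α = (p + Real.sqrt (p ^ 2 + 4 * q)) / 2)
    (hβ : β = (p - Real.sqrt (p ^ 2 + 4 * q)) / 2)
    (hA : A = b - a * β) (hB : B = b - a * α)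
    (hα1 : α ≠ 1) (hβ1 : β ≠ 1)
    (αq βq K : ℍ[ℝ])
    (hαq : αq = ⟨1, α, α ^ 2, α ^ 3⟩) (hβq : βq = ⟨1, β, β ^ 2, β ^ 3⟩)
    (hK : K = ((α - β) * (1 - α) * (1 - β))⁻¹ • ((A * (1 - β)) • αq - (B * (1 - α)) • βq)) :
    ∀ n : ℕ,
      (∑ i ∈ Finset.range (n + 1), dualHoradamQ a b p q i =
          inl ((α - β)⁻¹ •
              ((B * β ^ (n + 1) / (1 - β)) • βq - (A * α ^ (n + 1) / (1 - α)) • αq) + K) +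
            inl ((α - β)⁻¹ •
              ((B * β ^ (n + 2) / (1 - β)) • βq - (A * α ^ (n + 2) / (1 - α)) • αq) -
              horadamQ a b p q 0 + K) * ε) ∧
      (∑ i ∈ Finset.range (n + 1), horadamQ a b p q i =
          (α - β)⁻¹ •
            ((B * β ^ (n + 1) / (1 - β)) • βq - (A * α ^ (n + 1) / (1 - α)) • αq) + K) ∧
      (∑ i ∈ Finset.Icc 1 (n + 1), horadamQ a b p q i =
          (α - β)⁻¹ •
            ((B * β ^ (n + 2) / (1 - β)) • βq - (A * α ^ (n + 2) / (1 - α)) • αq) -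
            horadamQ a b p q 0 + K) := by
  -- basic facts
  have hs : Real.sqrt (p ^ 2 + 4 * q) > 0 := Real.sqrt_pos.mpr hpq
  have hs2 : Real.sqrt (p ^ 2 + 4 * q) ^ 2 = p ^ 2 + 4 * q := Real.sq_sqrt hpq.le
  have hαβ : α - β ≠ 0 := by rw [hα, hβ]; intro h; nlinarith
  have hrα : α ^ 2 = p * α + q := by rw [hα]; linear_combination hs2 / 4
  have hrβ : β ^ 2 = p * β + q := by rw [hβ]; linear_combination hs2 / 4
  have h1α : (1 : ℝ) - α ≠ 0 := fun h => hα1 (by linarith [sub_eq_zero.mp h])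
  have h1β : (1 : ℝ) - β ≠ 0 := fun h => hβ1 (by linarith [sub_eq_zero.mp h])
  have binet := horadam_binet a b p q α β A B hrα hrβ hA hB
  have binet' : ∀ n : ℕ, horadam a b p q n = (A * α ^ n - B * β ^ n) / (α - β) := by
    intro n
    field_simp
    linear_combination binet n
  -- Binet for quaternions
  have qbinet : ∀ n : ℕ, horadamQ a b p q n =
      (α - β)⁻¹ • ((A * α ^ n) • αq - (B * β ^ n) • βq) := by
    intro n
    ext <;>
      simp [horadamQ, binet' n, binet' (n + 1), binet' (n + 2), binet' (n + 3)] <;>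
      subst hαq hβq <;> simp only [] <;>
      field_simp <;> ring
  -- main sum formula over range
  have key : ∀ n : ℕ, ∑ i ∈ Finset.range (n + 1), horadamQ a b p q i =
      (α - β)⁻¹ •
        ((B * β ^ (n + 1) / (1 - β)) • βq - (A * α ^ (n + 1) / (1 - α)) • αq) + K := by
    intro n
    induction n with
    | zero =>
      rw [Finset.sum_range_one, qbinet 0, hK]
      match_scalars <;> field_simp <;> ring
    | succ n ih =>
      rw [Finset.sum_range_succ, ih, qbinet (n + 1)]
      match_scalars <;> field_simp <;> ring
  -- Icc sum
  have keyIcc : ∀ n : ℕ, ∑ i ∈ Finset.Icc 1 (n + 1), horadamQ a b p q i =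
      (α - β)⁻¹ •
        ((B * β ^ (n + 2) / (1 - β)) • βq - (A * α ^ (n + 2) / (1 - α)) • αq) -
        horadamQ a b p q 0 + K := by
    intro n
    have h : Finset.Icc 1 (n + 1) = Finset.Ico 1 (n + 2) := by
      exact (Finset.Ico_add_one_right_eq_Icc 1 (n + 1)).symm
    rw [h, Finset.sum_Ico_eq_sub _ (by omega), Finset.sum_range_one, key (n + 1)]
    abel
  intro n
  refine ⟨?_, key n, keyIcc n⟩
  have hsplit : ∀ i, dualHoradamQ a b p q i =
      inl (horadamQ a b p q i) + inl (horadamQ a b p q (i + 1)) * ε := fun i => rfl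
  calc ∑ i ∈ Finset.range (n + 1), dualHoradamQ a b p q i
      = inl (∑ i ∈ Finset.range (n + 1), horadamQ a b p q i) +
          inl (∑ i ∈ Finset.range (n + 1), horadamQ a b p q (i + 1)) * ε := by
        simp only [hsplit, Finset.sum_add_distrib, ← Finset.sum_mul, TrivSqZeroExt.inl_sum]
    _ = _ := by
        have hshift : ∑ i ∈ Finset.range (n + 1), horadamQ a b p q (i + 1) =
            ∑ i ∈ Finset.Icc 1 (n + 1), horadamQ a b p q i := by
          rw [show Finset.Icc 1 (n + 1) = Finset.Ico 1 (n + 2) by exact (Finset.Ico_add_one_right_eq_Icc 1 (n + 1)).symm,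
            Finset.sum_Ico_eq_sum_range]
          simp [add_comm]
        rw [hshift, key n, keyIcc n]
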